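/- Let f : H → ℝ be continuous quasiconvex and coercive (f(x) → ∞ as ‖x‖ → ∞) on a real Hilbert space, and suppose f satisfies the Hölder condition with degree β and constant L at a minimizer x⋆ on all of H. Then the sequence generated by x_{k+1} := P_D(α_k x_k + (1 − α_k) T(x_k − v_k g_k)) — with T nonexpansive fixing x⋆, P_D the projection onto a closed convex set D containing x⋆, α_k ∈ (0,1], ‖g_k‖ = 1, g_k ∈ ∂⋆f(x_k), and v_k < 1 for all sufficiently large k — is bounded. -/

import Mathlib

/-- Coercivity of the objective ensures boundedness of the generated sequence. -/
theorem stmt_16 {H : Type*} [NormedAddCommGroup H] [InnerProductSpace ℝ H]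
    (f : H → ℝ) (hcont : Continuous f)
    (hqc : ∀ u w : H, ∀ t : ℝ, t ∈ Set.Icc (0:ℝ) 1 →
      f ((1 - t) • u + t • w) ≤ max (f u) (f w))
    (hcoercive : ∀ c : ℝ, ∃ R : ℝ, ∀ z : H, R ≤ ‖z‖ → c ≤ f z)
    (T : H → H) (hT : ∀ u w : H, ‖T u - T w‖ ≤ ‖u - w‖)
    (D : Set H) (hDc : IsClosed D) (hDconv : Convex ℝ D)
    (P : H → H) (hP : ∀ z : H, P z ∈ D ∧ ∀ y ∈ D, ‖z - P z‖ ≤ ‖z - y‖)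
    (xstar : H) (hxsT : T xstar = xstar) (hxsD : xstar ∈ D)
    (hmin : ∀ y : H, T y = y → y ∈ D → f xstar ≤ f y)
    (β L : ℝ) (hβ : 0 < β) (hL : 0 < L)
    (hhold : ∀ z : H, |f z - f xstar| ≤ L * ‖z - xstar‖ ^ β)
    (v : ℕ → ℝ) (hv : ∀ k, 0 < v k) (hv1 : ∃ k₀ : ℕ, ∀ k ≥ k₀, v k < 1)
    (x : ℕ → H) (g : ℕ → H) (α : ℕ → ℝ)
    (hα : ∀ k, α k ∈ Set.Ioc (0:ℝ) 1)
    (hgk : ∀ k, ∀ y : H, f y < f (x k) → (inner ℝ (g k) (y - x k) : ℝ) ≤ 0)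
    (hgnorm : ∀ k, ‖g k‖ = 1)
    (hstep : ∀ k, x (k + 1) = P (α k • x k + (1 - α k) • T (x k - v k • g k))) :
    ∃ M : ℝ, ∀ k, ‖x k‖ ≤ M := by
  classical
  obtain ⟨k₀, hk₀⟩ := hv1
  obtain ⟨R, hR⟩ := hcoercive (f xstar + L + 1)
  set B : ℝ := |R| + ‖xstar‖ with hB
  -- the projection is nonexpansive at `xstar`
  have hPn : ∀ z : H, ‖P z - xstar‖ ≤ ‖z - xstar‖ := by
    intro z
    have hmem := (hP z).1
    haveI : Nonempty D := ⟨⟨xstar, hxsD⟩⟩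
    have hinf : ‖z - P z‖ = ⨅ w : D, ‖z - w‖ := by
      apply le_antisymm
      · exact le_ciInf fun w => (hP z).2 w w.2
      · have hbdd : BddBelow (Set.range fun w : D => ‖z - (w : H)‖) :=
          ⟨0, by rintro _ ⟨w, rfl⟩; exact norm_nonneg _⟩
        exact ciInf_le hbdd ⟨P z, hmem⟩
    have hVI := (norm_eq_iInf_iff_real_inner_le_zero hDconv hmem).mp hinf xstar hxsD
    have h1 : (0:ℝ) ≤ inner ℝ (z - P z) (P z - xstar) := by
      have hrw : xstar - P z = -(P z - xstar) := by abel
      rw [hrw, inner_neg_right] at hVI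
      linarith
    have expand : ‖z - xstar‖ ^ 2
        = ‖z - P z‖ ^ 2 + 2 * inner ℝ (z - P z) (P z - xstar) + ‖P z - xstar‖ ^ 2 := by
      have h2 : z - xstar = (z - P z) + (P z - xstar) := by abel
      rw [h2, @norm_add_sq_real]
    nlinarith [norm_nonneg (z - P z), norm_nonneg (P z - xstar), norm_nonneg (z - xstar)]
  -- the key one-step estimate
  have key : ∀ k, k₀ ≤ k → ‖x (k + 1) - xstar‖ ≤ max (‖x k - xstar‖) (B + 1) := by
    intro k hk
    obtain ⟨hα0, hα1⟩ := hα k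
    set r := ‖x k - xstar‖ with hr
    set q := ‖x k - v k • g k - xstar‖ with hq
    have hTle : ‖T (x k - v k • g k) - xstar‖ ≤ q := by
      calc ‖T (x k - v k • g k) - xstar‖ = ‖T (x k - v k • g k) - T xstar‖ := by rw [hxsT]
        _ ≤ q := hT _ _
    have hz : ‖x (k + 1) - xstar‖ ≤ α k * r + (1 - α k) * q := by
      rw [hstep k]
      refine (hPn _).trans ?_
      have hid : α k • x k + (1 - α k) • T (x k - v k • g k) - xstar
          = α k • (x k - xstar) + (1 - α k) • (T (x k - v k • g k) - xstar) := by
        module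
      rw [hid]
      refine (norm_add_le _ _).trans ?_
      rw [norm_smul, norm_smul, Real.norm_eq_abs, Real.norm_eq_abs,
        abs_of_pos hα0, abs_of_nonneg (by linarith : (0:ℝ) ≤ 1 - α k)]
      have := mul_le_mul_of_nonneg_left hTle (by linarith : (0:ℝ) ≤ 1 - α k)
      linarith
    have hvk := hv k
    have hvk1 := hk₀ k hk
    rcases le_or_gt (f (x k)) (f xstar + L) with h1 | h1
    · -- small sublevel case
      have hxk : ‖x k‖ < R := by
        by_contra hcon
        push_neg at hcon
        have := hR (x k) hcon
        linarith
      have hrB : r ≤ B := by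
        have := norm_sub_le (x k) xstar
        have : ‖x k‖ ≤ |R| := le_trans hxk.le (le_abs_self R)
        calc r ≤ ‖x k‖ + ‖xstar‖ := norm_sub_le _ _
          _ ≤ |R| + ‖xstar‖ := by linarith
      have hqB : q ≤ B + 1 := by
        have hid : x k - v k • g k - xstar = (x k - xstar) - v k • g k := by abel
        have : q ≤ r + ‖v k • g k‖ := by rw [hq, hid]; exact norm_sub_le _ _
        rw [norm_smul, Real.norm_eq_abs, abs_of_pos hvk, hgnorm k, mul_one] at this
        linarith
      refine le_trans hz (le_trans ?_ (le_max_right _ _))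
      nlinarith [mul_nonneg hα0.le (sub_nonneg.2 (by linarith : r ≤ B + 1)),
        mul_nonneg (by linarith : (0:ℝ) ≤ 1 - α k) (sub_nonneg.2 hqB)]
    · -- large value case: the subgradient step does not increase distance
      have hy : f (xstar + v k • g k) < f (x k) := by
        have hh := hhold (xstar + v k • g k)
        have hnrm : ‖xstar + v k • g k - xstar‖ = v k := by
          rw [add_sub_cancel_left, norm_smul, Real.norm_eq_abs, abs_of_pos hvk,
            hgnorm k, mul_one]
        rw [hnrm] at hh
        have hvβ : v k ^ β < 1 := Real.rpow_lt_one hvk.le hvk1 hβ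
        have hLv : L * v k ^ β < L := by nlinarith
        have := (abs_le.mp hh).2
        linarith
      have hin : v k ≤ inner ℝ (g k) (x k - xstar) := by
        have h0 := hgk k _ hy
        have hid : xstar + v k • g k - x k = -(x k - xstar) + v k • g k := by abel
        rw [hid, inner_add_right, inner_neg_right, real_inner_smul_right,
          real_inner_self_eq_norm_sq, hgnorm k] at h0
        linarith
      have hqr : q ≤ r := by
        have hid : x k - v k • g k - xstar = (x k - xstar) - v k • g k := by abel
        have hsq : q ^ 2 = r ^ 2 - 2 * inner ℝ (x k - xstar) (v k • g k) + ‖v k • g k‖ ^ 2 := by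
          rw [hq, hid, @norm_sub_sq_real, hr]
        rw [real_inner_smul_right, norm_smul, Real.norm_eq_abs, abs_of_pos hvk,
          hgnorm k, mul_one] at hsq
        have hsym : (inner ℝ (x k - xstar) (g k) : ℝ) = inner ℝ (g k) (x k - xstar) :=
          real_inner_comm _ _
        rw [hsym] at hsq
        nlinarith [norm_nonneg (x k - v k • g k - xstar), norm_nonneg (x k - xstar)]
      refine le_trans hz (le_trans ?_ (le_max_left _ _))
      nlinarith [mul_nonneg (by linarith : (0:ℝ) ≤ 1 - α k) (sub_nonneg.2 hqr)]
  -- iterate the estimate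
  set C : ℝ := max (‖x k₀ - xstar‖) (B + 1) with hC
  have bound : ∀ n, ‖x (k₀ + n) - xstar‖ ≤ C := by
    intro n
    induction n with
    | zero => exact le_max_left _ _
    | succ n ih =>
      exact le_trans (key (k₀ + n) (Nat.le_add_right _ _)) (max_le ih (le_max_right _ _))
  refine ⟨max (((Finset.range (k₀ + 1)).sup' (by simp) fun k => ‖x k‖)) (C + ‖xstar‖),
    fun k => ?_⟩
  rcases le_or_gt k₀ k with hk | hk
  · obtain ⟨n, rfl⟩ := Nat.exists_eq_add_of_le hk
    have h1 : ‖x (k₀ + n)‖ ≤ ‖x (k₀ + n) - xstar‖ + ‖xstar‖ := by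
      calc ‖x (k₀ + n)‖ = ‖x (k₀ + n) - xstar + xstar‖ := by rw [sub_add_cancel]
        _ ≤ _ := norm_add_le _ _
    exact le_trans (by linarith [bound n]) (le_max_right _ _)
  · refine le_trans ?_ (le_max_left _ _)
    exact Finset.le_sup' (fun k => ‖x k‖) (Finset.mem_range.mpr (by omega))
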